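/- Let E be a real Banach space, let X : E → E be a vector field, and let γ : ℝ → E be differentiable with deriv γ t = X (γ t) for all t ∈ ℝ (an integral curve of X). Let s ∈ ℕ, let f : Fin s → E → ℝ be functions each differentiable on E, and let h : Fin s → Fin s → E → ℝ be such that for each i, j the function t ↦ h j i (γ t) is continuous on ℝ. Assume the Darboux-family relation: for every j ∈ Fin s and every x ∈ E, fderiv ℝ (f j) x (X x) = Σ_{i} (h j i x) * (f i x). If f i (γ 0) = 0 for every i ∈ Fin s, then f i (γ t) = 0 for every i ∈ Fin s and every t ∈ ℝ. -/

import Mathlib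

/-- Along an integral curve of a vector field `X` on a real Banach space, a Darboux
family of functions (with continuous cofactors along the curve) that vanishes at the
initial point of the curve vanishes along the whole curve. -/
theorem stmt_2 {E : Type*} [NormedAddCommGroup E] [NormedSpace ℝ E] [CompleteSpace E]
    (X : E → E) (γ : ℝ → E) (hγ : Differentiable ℝ γ)
    (hint : ∀ t : ℝ, deriv γ t = X (γ t))
    (s : ℕ) (f : Fin s → E → ℝ) (hf : ∀ i, Differentiable ℝ (f i))
    (h : Fin s → Fin s → E → ℝ)
    (hcont : ∀ i j : Fin s, Continuous fun t : ℝ => h j i (γ t))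
    (hDar : ∀ (j : Fin s) (x : E), fderiv ℝ (f j) x (X x) = ∑ i, h j i x * f i x)
    (h0 : ∀ i, f i (γ 0) = 0) :
    ∀ (i : Fin s) (t : ℝ), f i (γ t) = 0 := by
  intro i t
  -- work on the interval [-a, a] with a = |t| + 1
  set a : ℝ := |t| + 1 with ha
  have haneg : -a < a := by
    have := abs_nonneg t; simp only [ha]; linarith
  have ht_mem : t ∈ Set.Icc (-a) a := by
    constructor
    · have := neg_abs_le t; simp only [ha]; linarith
    · have := le_abs_self t; simp only [ha]; linarith
  have h0_mem : (0 : ℝ) ∈ Set.Ioo (-a) a := by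
    have := abs_nonneg t
    constructor <;> (simp only [ha]; linarith)
  -- the curve in coordinates
  set F : ℝ → (Fin s → ℝ) := fun u j => f j (γ u) with hF
  -- projection onto the interval
  set π : ℝ → ℝ := fun u => max (-a) (min a u) with hπ
  have hπ_mem : ∀ u, π u ∈ Set.Icc (-a) a := fun u =>
    ⟨le_max_left _ _, max_le haneg.le (min_le_left _ _)⟩
  have hπ_eq : ∀ u ∈ Set.Icc (-a) a, π u = u := by
    intro u hu
    simp only [hπ]
    rw [min_eq_right hu.2, max_eq_right hu.1]
  -- the vector field of the linear ODE
  set v : ℝ → (Fin s → ℝ) → (Fin s → ℝ) :=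
    fun u y j => ∑ k, h j k (γ (π u)) * y k with hv
  -- bound on the coefficients over the compact interval
  obtain ⟨C, hC0, hC⟩ :
      ∃ C : ℝ, 0 ≤ C ∧ ∀ u ∈ Set.Icc (-a) a, ∀ j k : Fin s, |h j k (γ u)| ≤ C := by
    obtain ⟨C, hC⟩ := (isCompact_Icc (a := -a) (b := a)).exists_bound_of_continuousOn
      (f := fun u => (fun jk : Fin s × Fin s => h jk.1 jk.2 (γ u)))
      (Continuous.continuousOn (continuous_pi fun jk => hcont jk.2 jk.1))
    refine ⟨|C|, abs_nonneg _, fun u hu j k => ?_⟩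
    calc |h j k (γ u)| ≤ ‖fun jk : Fin s × Fin s => h jk.1 jk.2 (γ u)‖ := by
          simpa using norm_le_pi_norm (f := fun jk : Fin s × Fin s => h jk.1 jk.2 (γ u)) (j, k)
      _ ≤ C := hC u hu
      _ ≤ |C| := le_abs_self C
  -- Lipschitz bound for `v u`
  set K : NNReal := ⟨s * C, mul_nonneg (Nat.cast_nonneg s) hC0⟩ with hK
  have hLip : ∀ u : ℝ, LipschitzOnWith K (v u) Set.univ := by
    intro u
    rw [lipschitzOnWith_univ]
    apply LipschitzWith.of_dist_le_mul
    intro y y'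
    rw [show ((K : ℝ)) = (s : ℝ) * C from rfl,
      dist_pi_le_iff (mul_nonneg (mul_nonneg (Nat.cast_nonneg s) hC0) dist_nonneg)]
    intro j
    have : v u y j - v u y' j = ∑ k, h j k (γ (π u)) * (y k - y' k) := by
      simp [hv, ← Finset.sum_sub_distrib, mul_sub]
    rw [Real.dist_eq, this]
    calc |∑ k, h j k (γ (π u)) * (y k - y' k)|
        ≤ ∑ k, |h j k (γ (π u)) * (y k - y' k)| := Finset.abs_sum_le_sum_abs _ _
      _ ≤ ∑ _k : Fin s, C * dist y y' := by
          apply Finset.sum_le_sum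
          intro k _
          rw [abs_mul]
          have h1 : |h j k (γ (π u))| ≤ C := hC _ (hπ_mem u) j k
          have h2 : |y k - y' k| ≤ dist y y' := by
            rw [← Real.dist_eq]
            exact dist_le_pi_dist y y' k
          exact mul_le_mul h1 h2 (abs_nonneg _) hC0
      _ = (s : ℝ) * C * dist y y' := by
          simp [Finset.sum_const]
          ring
  -- F solves the ODE on the open interval
  have hF' : ∀ u ∈ Set.Ioo (-a) a, HasDerivAt F (v u (F u)) u := by
    intro u hu
    rw [hasDerivAt_pi]
    intro j
    have hd : HasDerivAt (fun w => f j (γ w)) (fderiv ℝ (f j) (γ u) (deriv γ u)) u :=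
      ((hf j).differentiableAt.hasFDerivAt).comp_hasDerivAt u (hγ u).hasDerivAt
    have : fderiv ℝ (f j) (γ u) (deriv γ u) = v u (F u) j := by
      rw [hint u, hDar j (γ u)]
      simp [hv, hF, hπ_eq u (Set.mem_Icc_of_Ioo hu)]
    rw [this] at hd
    exact hd
  -- the zero function solves the ODE too
  have hZ' : ∀ u ∈ Set.Ioo (-a) a, HasDerivAt (fun _ : ℝ => (0 : Fin s → ℝ))
      (v u ((fun _ : ℝ => (0 : Fin s → ℝ)) u)) u := by
    intro u _
    have : v u (0 : Fin s → ℝ) = 0 := by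
      funext j; simp [hv]
    rw [this]
    exact hasDerivAt_const u 0
  -- continuity of F
  have hFc : Continuous F := by
    apply continuous_pi
    intro j
    exact ((hf j).comp hγ).continuous
  -- uniqueness
  have heq := ODE_solution_unique_of_mem_Icc (v := v) (s := fun _ => Set.univ) (fun u _ => hLip u)
    h0_mem hFc.continuousOn hF' (fun _ _ => Set.mem_univ _)
    continuousOn_const hZ' (fun _ _ => Set.mem_univ _)
    (by funext j; simp [hF, h0 j])
  have := heq ht_mem
  have : F t i = 0 := by rw [this]; rfl
  simpa [hF] using this
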